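/- Let X, Y be integrable random variables, and suppose X ≤_disp Y, i.e., F_X^{-1}(v) − F_X^{-1}(u) ≤ F_Y^{-1}(v) − F_Y^{-1}(u) for all 0 < u < v < 1. Then X − EX ≤_cx Y − EY. -/

import Mathlib

open MeasureTheory Set

section Helpers

open Filter ProbabilityTheory
open scoped Topology

end Helpers

/-- The (left-continuous generalized) quantile function of a distribution `P` on `ℝ`. -/
noncomputable def quantileFn (P : Measure ℝ) (p : ℝ) : ℝ :=
  sInf {x : ℝ | p ≤ (P (Iic x)).toReal}

section Quantile

open Filter ProbabilityTheory
open scoped Topology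

set_option linter.unusedSectionVars false

variable (P : Measure ℝ) [IsProbabilityMeasure P]

lemma quantileFn_eq (p : ℝ) : quantileFn P p = sInf {x : ℝ | p ≤ cdf P x} := by
  simp_rw [quantileFn, cdf_eq_real, measureReal_def]

lemma quantile_set_nonempty {p : ℝ} (hp1 : p < 1) : {x : ℝ | p ≤ cdf P x}.Nonempty := by
  have := tendsto_cdf_atTop P
  have h : ∀ᶠ x in atTop, p < cdf P x := this.eventually_const_lt hp1
  obtain ⟨x, hx⟩ := h.exists
  exact ⟨x, hx.le⟩

lemma quantile_set_bddBelow {p : ℝ} (hp : 0 < p) : BddBelow {x : ℝ | p ≤ cdf P x} := by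
  have := tendsto_cdf_atBot P
  have h : ∀ᶠ x in atBot, cdf P x < p := this.eventually_lt_const hp
  obtain ⟨x, hx⟩ := h.exists
  refine ⟨x, fun y hy => ?_⟩
  by_contra hxy
  push_neg at hxy
  exact absurd (le_trans hy (monotone_cdf P hxy.le)) (not_le.mpr hx)

lemma quantileFn_le_iff {p x : ℝ} (hp : 0 < p) (hp1 : p < 1) :
    quantileFn P p ≤ x ↔ p ≤ cdf P x := by
  rw [quantileFn_eq]
  constructor
  · intro h
    have hy : ∀ y, x < y → p ≤ cdf P y := by
      intro y hxy
      have : sInf {x : ℝ | p ≤ cdf P x} < y := lt_of_le_of_lt h hxy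
      obtain ⟨z, hz, hzy⟩ := (csInf_lt_iff (quantile_set_bddBelow P hp)
        (quantile_set_nonempty P hp1)).mp this
      exact le_trans hz (monotone_cdf P hzy.le)
    have hrc : ContinuousWithinAt (cdf P) (Ici x) x := (cdf P).right_continuous x
    have htd : Tendsto (cdf P) (𝓝[>] x) (𝓝 (cdf P x)) :=
      hrc.tendsto.mono_left (nhdsWithin_mono x Ioi_subset_Ici_self)
    exact ge_of_tendsto htd (eventually_nhdsWithin_of_forall (fun y hy' => hy y hy'))
  · intro h
    exact csInf_le (quantile_set_bddBelow P hp) h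

lemma quantileFn_monotoneOn : MonotoneOn (quantileFn P) (Ioo (0:ℝ) 1) := by
  intro u hu v hv huv
  rw [quantileFn_eq, quantileFn_eq]
  exact csInf_le_csInf (quantile_set_bddBelow P hu.1)
    (quantile_set_nonempty P hv.2) (fun x hx => le_trans huv hx)

lemma quantileFn_aemeasurable :
    AEMeasurable (quantileFn P) (volume.restrict (Ioo (0:ℝ) 1)) :=
  aemeasurable_restrict_of_monotoneOn measurableSet_Ioo (quantileFn_monotoneOn P)

instance : IsProbabilityMeasure (volume.restrict (Ioo (0:ℝ) 1)) :=
  ⟨by simp [Real.volume_Ioo]⟩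

lemma map_quantileFn :
    Measure.map (quantileFn P) (volume.restrict (Ioo (0:ℝ) 1)) = P := by
  have hqm := quantileFn_aemeasurable P
  have : IsProbabilityMeasure (Measure.map (quantileFn P) (volume.restrict (Ioo (0:ℝ) 1))) :=
    Measure.isProbabilityMeasure_map hqm
  refine Measure.ext_of_Iic _ _ (fun x => ?_)
  rw [Measure.map_apply_of_aemeasurable hqm measurableSet_Iic,
    Measure.restrict_apply₀' (measurableSet_Ioo.nullMeasurableSet)]
  have hset : quantileFn P ⁻¹' Iic x ∩ Ioo 0 1 = Iic (cdf P x) ∩ Ioo 0 1 := by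
    ext p
    simp only [mem_inter_iff, mem_preimage, mem_Iic, mem_Ioo, and_congr_left_iff]
    intro hp
    rw [quantileFn_le_iff P hp.1 hp.2]
  rw [hset, ← ofReal_cdf P x]
  have h1 : Ioo (0:ℝ) (cdf P x) ⊆ Iic (cdf P x) ∩ Ioo 0 1 := by
    intro y hy
    exact ⟨hy.2.le, hy.1, lt_of_lt_of_le hy.2 (cdf_le_one P x)⟩
  have h2 : Iic (cdf P x) ∩ Ioo 0 1 ⊆ Ioc 0 (cdf P x) := fun y hy => ⟨hy.2.1, hy.1⟩
  refine le_antisymm (le_trans (measure_mono h2) ?_) (le_trans ?_ (measure_mono h1))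
  · simp [Real.volume_Ioc]
  · simp [Real.volume_Ioo]

lemma integrable_comp_quantile {f : ℝ → ℝ} (hf : Continuous f) (h : Integrable f P) :
    Integrable (fun u => f (quantileFn P u)) (volume.restrict (Ioo (0:ℝ) 1)) := by
  rw [← map_quantileFn P] at h
  exact (integrable_map_measure hf.aestronglyMeasurable (quantileFn_aemeasurable P)).mp h

lemma integral_comp_quantile {f : ℝ → ℝ} (hf : Continuous f) :
    ∫ u in Ioo (0:ℝ) 1, f (quantileFn P u) = ∫ x, f x ∂P := by
  have h := integral_map (f := f) (quantileFn_aemeasurable P) hf.aestronglyMeasurable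
  rw [map_quantileFn P] at h
  exact h.symm

end Quantile

lemma convex_exists_support_slope {φ : ℝ → ℝ} (hφ : ConvexOn ℝ univ φ) (t : ℝ) :
    ∃ s : ℝ, ∀ a b : ℝ, ((t ≤ a ∧ a ≤ b) ∨ (b ≤ a ∧ a ≤ t)) → s * (b - a) ≤ φ b - φ a := by
  have hadj : ∀ x y z : ℝ, x < y → y < z →
      (φ y - φ x) / (y - x) ≤ (φ z - φ y) / (z - y) := fun x y z hxy hyz =>
    hφ.slope_mono_adjacent (mem_univ x) (mem_univ z) hxy hyz
  set S : Set ℝ := (fun a => (φ t - φ a) / (t - a)) '' Iio t with hS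
  have hne : S.Nonempty := ⟨_, ⟨t - 1, by simp [sub_lt_self t one_pos], rfl⟩⟩
  have hbdd : BddAbove S := by
    refine ⟨(φ (t+1) - φ t) / (t + 1 - t), ?_⟩
    rintro _ ⟨a, ha, rfl⟩
    exact hadj a t (t+1) ha (by linarith)
  have hs1 : ∀ a, a < t → (φ t - φ a) / (t - a) ≤ sSup S := fun a ha =>
    le_csSup hbdd ⟨a, ha, rfl⟩
  have hs2 : ∀ b, t < b → sSup S ≤ (φ b - φ t) / (b - t) := by
    intro b hb
    refine csSup_le hne ?_
    rintro _ ⟨a, ha, rfl⟩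
    exact hadj a t b ha hb
  refine ⟨sSup S, fun a b hab => ?_⟩
  rcases hab with ⟨hta, habl⟩ | ⟨hba, hat⟩
  · rcases eq_or_lt_of_le habl with rfl | hab'
    · simp
    · have hsl : sSup S ≤ (φ b - φ a) / (b - a) := by
        rcases eq_or_lt_of_le hta with rfl | hta'
        · exact hs2 b hab'
        · exact le_trans (hs2 a hta') (hadj t a b hta' hab')
      have := mul_le_mul_of_nonneg_right hsl (by linarith : (0:ℝ) ≤ b - a)
      rw [div_mul_cancel₀ _ (by linarith : b - a ≠ 0)] at this
      linarith
  · rcases eq_or_lt_of_le hba with rfl | hba'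
    · simp
    · have hsl : (φ a - φ b) / (a - b) ≤ sSup S := by
        rcases eq_or_lt_of_le hat with rfl | hat'
        · exact hs1 b hba'
        · exact le_trans (hadj b a t hba' hat') (hs1 a hat')
      have := mul_le_mul_of_nonneg_right hsl (by linarith : (0:ℝ) ≤ a - b)
      rw [div_mul_cancel₀ _ (by linarith : a - b ≠ 0)] at this
      linarith

set_option maxHeartbeats 1000000 in
/-- the dispersive order implies the dilation order: if
`F_X⁻¹(v) − F_X⁻¹(u) ≤ F_Y⁻¹(v) − F_Y⁻¹(u)` for all `0 < u < v < 1`, then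
`X − EX ≤_cx Y − EY`. -/
theorem dispersive_implies_dilation
    (P Q : Measure ℝ) [IsProbabilityMeasure P] [IsProbabilityMeasure Q]
    (hIP : Integrable id P) (hIQ : Integrable id Q)
    (hdisp : ∀ u v : ℝ, 0 < u → u < v → v < 1 →
        quantileFn P v - quantileFn P u ≤ quantileFn Q v - quantileFn Q u)
    (mP mQ : ℝ) (hmP : mP = ∫ x, x ∂P) (hmQ : mQ = ∫ x, x ∂Q) :
    ∀ φ : ℝ → ℝ, ConvexOn ℝ univ φ →
      Integrable (fun x => φ (x - mP)) P → Integrable (fun x => φ (x - mQ)) Q →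
      ∫ x, φ (x - mP) ∂P ≤ ∫ x, φ (x - mQ) ∂Q := by
  intro φ hφ hIPφ hIQφ
  classical
  set μ := volume.restrict (Ioo (0:ℝ) 1) with hμ
  have hφc : Continuous φ := continuousOn_univ.mp (hφ.continuousOn isOpen_univ)
  set X : ℝ → ℝ := fun u => quantileFn P u - mP with hXdef
  set Y : ℝ → ℝ := fun u => quantileFn Q u - mQ with hYdef
  set d : ℝ → ℝ := fun u => Y u - X u with hddef
  -- integrability and integral identities
  have hiφX : Integrable (fun u => φ (X u)) μ :=
    integrable_comp_quantile P (f := fun x => φ (x - mP))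
      (hφc.comp (continuous_id.sub continuous_const)) hIPφ
  have hiφY : Integrable (fun u => φ (Y u)) μ :=
    integrable_comp_quantile Q (f := fun x => φ (x - mQ))
      (hφc.comp (continuous_id.sub continuous_const)) hIQφ
  have hIφX : ∫ u, φ (X u) ∂μ = ∫ x, φ (x - mP) ∂P :=
    integral_comp_quantile P (f := fun x => φ (x - mP))
      (hφc.comp (continuous_id.sub continuous_const))
  have hIφY : ∫ u, φ (Y u) ∂μ = ∫ x, φ (x - mQ) ∂Q :=
    integral_comp_quantile Q (f := fun x => φ (x - mQ))
      (hφc.comp (continuous_id.sub continuous_const))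
  have hiqP : Integrable (fun u => quantileFn P u) μ :=
    integrable_comp_quantile P (f := fun x => x) continuous_id hIP
  have hiqQ : Integrable (fun u => quantileFn Q u) μ :=
    integrable_comp_quantile Q (f := fun x => x) continuous_id hIQ
  have hIqP : ∫ u, quantileFn P u ∂μ = mP := by
    rw [hmP]; exact integral_comp_quantile P (f := fun x => x) continuous_id
  have hIqQ : ∫ u, quantileFn Q u ∂μ = mQ := by
    rw [hmQ]; exact integral_comp_quantile Q (f := fun x => x) continuous_id
  have hiX : Integrable X μ := hiqP.sub (integrable_const mP)
  have hiY : Integrable Y μ := hiqQ.sub (integrable_const mQ)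
  have hid : Integrable d μ := hiY.sub hiX
  have hIX : ∫ u, X u ∂μ = 0 := by
    rw [hXdef]
    rw [integral_sub hiqP (integrable_const mP), hIqP, integral_const]
    simp
  have hIY : ∫ u, Y u ∂μ = 0 := by
    rw [hYdef]
    rw [integral_sub hiqQ (integrable_const mQ), hIqQ, integral_const]
    simp
  have hId : ∫ u, d u ∂μ = 0 := by
    rw [hddef, integral_sub hiY hiX, hIX, hIY]
    simp
  -- monotonicity
  have hXmono : MonotoneOn X (Ioo (0:ℝ) 1) := fun u hu v hv huv =>
    sub_le_sub_right (quantileFn_monotoneOn P hu hv huv) mP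
  have hdmono : MonotoneOn d (Ioo (0:ℝ) 1) := by
    intro u hu v hv huv
    rcases huv.lt_or_eq with huv' | rfl
    · have := hdisp u v hu.1 huv' hv.2
      simp only [hddef, hYdef, hXdef]
      linarith
    · exact le_refl _
  -- degenerate cases: d of constant sign
  by_cases hpos : ∀ u ∈ Ioo (0:ℝ) 1, 0 ≤ d u
  · have hae : 0 ≤ᵐ[μ] d := (ae_restrict_mem measurableSet_Ioo).mono (fun u hu => hpos u hu)
    have hd0 : d =ᵐ[μ] 0 := (integral_eq_zero_iff_of_nonneg_ae hae hid).mp hId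
    have hYX : (fun u => φ (Y u)) =ᵐ[μ] (fun u => φ (X u)) := by
      filter_upwards [hd0] with u hu
      have : Y u = X u := by
        have : Y u - X u = 0 := hu
        linarith
      rw [this]
    rw [← hIφX, ← hIφY, integral_congr_ae hYX]
  by_cases hneg : ∀ u ∈ Ioo (0:ℝ) 1, d u ≤ 0
  · have hae : 0 ≤ᵐ[μ] (fun u => -d u) :=
      (ae_restrict_mem measurableSet_Ioo).mono (fun u hu => neg_nonneg.mpr (hneg u hu))
    have hnd0 : (fun u => -d u) =ᵐ[μ] 0 := by
      refine (integral_eq_zero_iff_of_nonneg_ae hae hid.neg).mp ?_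
      rw [integral_neg, hId, neg_zero]
    have hYX : (fun u => φ (Y u)) =ᵐ[μ] (fun u => φ (X u)) := by
      filter_upwards [hnd0] with u hu
      have h0 : -(Y u - X u) = 0 := hu
      have : Y u = X u := by linarith
      rw [this]
    rw [← hIφX, ← hIφY, integral_congr_ae hYX]
  -- main case: d changes sign
  push_neg at hpos hneg
  obtain ⟨a, ha, hda⟩ := hpos
  obtain ⟨b, hb, hdb⟩ := hneg
  set T : Set ℝ := {u | u ∈ Ioo (0:ℝ) 1 ∧ d u ≤ 0} with hT
  have haT : a ∈ T := ⟨ha, hda.le⟩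
  have hTb : ∀ w ∈ T, w ≤ b := by
    intro w hw
    by_contra hbw
    push_neg at hbw
    exact absurd (le_trans (hdmono hb hw.1 hbw.le) hw.2) (not_le.mpr hdb)
  have hbddT : BddAbove T := ⟨b, hTb⟩
  set c : ℝ := sSup T with hc
  have hac : a ≤ c := le_csSup hbddT haT
  have hcb : c ≤ b := csSup_le ⟨a, haT⟩ hTb
  have hcIoo : c ∈ Ioo (0:ℝ) 1 := ⟨lt_of_lt_of_le ha.1 hac, lt_of_le_of_lt hcb hb.2⟩
  obtain ⟨s, hkey⟩ := convex_exists_support_slope hφ (X c)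
  have hpt : ∀ u ∈ Ioo (0:ℝ) 1, φ (X u) + s * d u ≤ φ (Y u) := by
    intro u hu
    have hdu : d u = Y u - X u := rfl
    rcases lt_trichotomy (d u) 0 with h | h | h
    · have huc : u ≤ c := le_csSup hbddT ⟨hu, h.le⟩
      have hXuc : X u ≤ X c := hXmono hu hcIoo huc
      have hYX : Y u ≤ X u := by rw [hdu] at h; linarith
      have := hkey (X u) (Y u) (Or.inr ⟨hYX, hXuc⟩)
      rw [hdu]; linarith
    · have hYX : Y u = X u := by rw [hdu] at h; linarith
      rw [hYX, h]; simp
    · have hcu : c ≤ u := by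
        refine csSup_le ⟨a, haT⟩ (fun w hw => ?_)
        by_contra huw
        push_neg at huw
        exact absurd (le_trans (hdmono hu hw.1 huw.le) hw.2) (not_le.mpr h)
      have hXcu : X c ≤ X u := hXmono hcIoo hu hcu
      have hXY : X u ≤ Y u := by rw [hdu] at h; linarith
      have := hkey (X u) (Y u) (Or.inl ⟨hXcu, hXY⟩)
      rw [hdu]; linarith
  have haept : ∀ᵐ u ∂μ, φ (X u) + s * d u ≤ φ (Y u) :=
    (ae_restrict_mem measurableSet_Ioo).mono (fun u hu => hpt u hu)
  have hint1 : Integrable (fun u => φ (X u) + s * d u) μ := hiφX.add (hid.const_mul s)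
  have hmono : ∫ u, (φ (X u) + s * d u) ∂μ ≤ ∫ u, φ (Y u) ∂μ :=
    integral_mono_ae hint1 hiφY haept
  rw [integral_add hiφX (hid.const_mul s), integral_const_mul, hId, mul_zero, add_zero,
    hIφX, hIφY] at hmono
  exact hmono
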